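/- Let B = {ψ_j}_{j=1}^d and B' = {φ_k}_{k=1}^d be orthonormal bases of ℂ^d, and let P = Σ_j Σ_{k∈A_j} |ψ_j⟩⟨ψ_j|⊗|φ_k⟩⟨φ_k| for subsets A_j ⊆ {1,…,d}. If P ≥ |Φ⟩⟨Φ| (equivalently ⟨Φ|P|Φ⟩ = 1), then P ≥ P(B) = Σ_j |ψ_j⟩⟨ψ_j|⊗|ψ_j*⟩⟨ψ_j*|. -/

import Mathlib

open Matrix
open scoped ComplexOrder

/-- The conjugate-basis test projector P(B) = Σ_{ψ∈B} |ψ⟩⟨ψ| ⊗ |ψ*⟩⟨ψ*| on ℂ^d ⊗ ℂ^d. -/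
noncomputable def projCB (d : ℕ) (B : Fin d → Fin d → ℂ) :
    Matrix (Fin d × Fin d) (Fin d × Fin d) ℂ :=
  ∑ i, Matrix.kroneckerMap (· * ·) (Matrix.vecMulVec (B i) (star (B i)))
      (Matrix.vecMulVec (star (B i)) (B i))

/-- The maximally entangled state |Φ⟩ = d^{-1/2} Σ_j |j⟩⊗|j⟩ as a vector on Fin d × Fin d. -/
noncomputable def PhiVec (d : ℕ) : Fin d × Fin d → ℂ :=
  fun p => if p.1 = p.2 then ((Real.sqrt d : ℝ) : ℂ)⁻¹ else 0

/-- The rank-one projector |Φ⟩⟨Φ|. -/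
noncomputable def PhiMat (d : ℕ) : Matrix (Fin d × Fin d) (Fin d × Fin d) ℂ :=
  Matrix.vecMulVec (PhiVec d) (star (PhiVec d))

/-- B is an orthonormal basis of ℂ^d. -/
def IsONB (d : ℕ) (B : Fin d → Fin d → ℂ) : Prop :=
  ∀ i j, star (B i) ⬝ᵥ B j = if i = j then 1 else 0

-- === aux ===
namespace Stmt11Aux
set_option linter.unusedSectionVars false
variable {n m : Type*} [Fintype n] [Fintype m]

lemma vecMulVec_mulVec (u v x : n → ℂ) :
    vecMulVec u v *ᵥ x = (v ⬝ᵥ x) • u := by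
  ext i
  simp only [mulVec, dotProduct, vecMulVec_apply, Pi.smul_apply, smul_eq_mul, Finset.sum_mul]
  apply Finset.sum_congr rfl
  intros; ring

lemma star_dot_aux (u x : n → ℂ) : star (star u ⬝ᵥ x) = star x ⬝ᵥ u := by
  simp [dotProduct, star_sum, mul_comm]

lemma qform_vecMulVec (u x : n → ℂ) :
    star x ⬝ᵥ (vecMulVec u (star u) *ᵥ x) = (star u ⬝ᵥ x) * star (star u ⬝ᵥ x) := by
  rw [vecMulVec_mulVec, dotProduct_smul, star_dot_aux]
  ring_nf

lemma mul_vecMulVec (A : Matrix n m ℂ) (u : m → ℂ) (v : n → ℂ) :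
    A * vecMulVec u v = vecMulVec (A *ᵥ u) v := by
  ext i j
  simp [mul_apply, vecMulVec_apply, mulVec, dotProduct, Finset.sum_mul, mul_assoc]

lemma vecMulVec_mul_vecMulVec (a : n → ℂ) (b c : m → ℂ) (e : n → ℂ) :
    vecMulVec a b * vecMulVec c e = (b ⬝ᵥ c) • vecMulVec a e := by
  ext i j
  simp only [mul_apply, vecMulVec_apply, Matrix.smul_apply, smul_eq_mul, dotProduct, Finset.sum_mul]
  apply Finset.sum_congr rfl
  intros; ring

lemma conjTranspose_vecMulVec (a b : n → ℂ) :
    (vecMulVec a b)ᴴ = vecMulVec (star b) (star a) := by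
  ext i j
  simp [conjTranspose_apply, vecMulVec_apply, mul_comm]

lemma kron_conjTranspose (A : Matrix n n ℂ) (B : Matrix m m ℂ) :
    (kroneckerMap (· * ·) A B)ᴴ = kroneckerMap (· * ·) Aᴴ Bᴴ := by
  ext i j
  simp [conjTranspose_apply, kroneckerMap_apply, mul_comm]

lemma psd_of_idem (M : Matrix n n ℂ) (h1 : Mᴴ = M) (h2 : M * M = M) : M.PosSemidef := by
  have : M = Mᴴ * M := by rw [h1, h2]
  rw [this]
  exact posSemidef_conjTranspose_mul_self M

lemma psd_sum {ι : Type*} (s : Finset ι) (M : ι → Matrix n n ℂ)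
    (h : ∀ j ∈ s, (M j).PosSemidef) : (∑ j ∈ s, M j).PosSemidef := by
  classical
  induction s using Finset.induction with
  | empty => simpa using Matrix.PosSemidef.zero
  | insert _ _ hx ih =>
    rw [Finset.sum_insert hx]
    exact (h _ (Finset.mem_insert_self _ _)).add (ih fun j hj => h j (Finset.mem_insert_of_mem hj))

lemma mul_star_self_eq_zero' (a : ℂ) (h : a * star a = 0) : a = 0 := by
  have := Complex.mul_conj a
  rw [Complex.star_def] at h
  rw [h] at this
  exact Complex.normSq_eq_zero.mp (by exact_mod_cast this.symm)

lemma kron_sub_right (A : Matrix n n ℂ) (B C : Matrix m m ℂ) :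
    kroneckerMap (· * ·) A (B - C) = kroneckerMap (· * ·) A B - kroneckerMap (· * ·) A C := by
  ext i j
  simp [kroneckerMap_apply, mul_sub]

lemma kron_sum_right {ι : Type*} (s : Finset ι) (A : Matrix n n ℂ) (N : ι → Matrix m m ℂ) :
    kroneckerMap (· * ·) A (∑ k ∈ s, N k) = ∑ k ∈ s, kroneckerMap (· * ·) A (N k) := by
  ext i j
  simp [kroneckerMap_apply, Matrix.sum_apply, Finset.mul_sum]

lemma sum_mulVec' {ι : Type*} (s : Finset ι) (M : ι → Matrix n n ℂ) (x : n → ℂ) :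
    (∑ j ∈ s, M j) *ᵥ x = ∑ j ∈ s, M j *ᵥ x := by
  ext i
  simp only [mulVec, dotProduct, Matrix.sum_apply, Finset.sum_apply, Finset.sum_mul]
  rw [Finset.sum_comm]

lemma dot_sum {ι : Type*} (s : Finset ι) (a : n → ℂ) (f : ι → n → ℂ) :
    a ⬝ᵥ (∑ j ∈ s, f j) = ∑ j ∈ s, a ⬝ᵥ f j := by
  simp only [dotProduct, Finset.sum_apply, Finset.mul_sum]
  rw [Finset.sum_comm]

end Stmt11Aux

open Stmt11Aux

-- completeness relation V Vᴴ = 1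
lemma onb_complete {d : ℕ} {B' : Fin d → Fin d → ℂ} (hB' : IsONB d B') (i i' : Fin d) :
    (∑ k, B' k i * star (B' k i')) = if i = i' then 1 else 0 := by
  classical
  let V : Matrix (Fin d) (Fin d) ℂ := Matrix.of fun i k => B' k i
  have h1 : Vᴴ * V = 1 := by
    ext k l
    have := hB' k l
    simpa [Matrix.mul_apply, Matrix.conjTranspose_apply, V, Matrix.one_apply, dotProduct] using this
  have h2 : V * Vᴴ = 1 := mul_eq_one_comm.mp h1
  have := congrFun (congrFun h2 i) i'
  simpa [Matrix.mul_apply, Matrix.conjTranspose_apply, V, Matrix.one_apply] using this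

-- Parseval
lemma parseval {d : ℕ} {B B' : Fin d → Fin d → ℂ} (hB : IsONB d B) (hB' : IsONB d B') (j : Fin d) :
    (∑ k, (∑ i, B j i * B' k i) * star (∑ i, B j i * B' k i)) = 1 := by
  calc (∑ k, (∑ i, B j i * B' k i) * star (∑ i, B j i * B' k i))
      = ∑ k, ∑ i, ∑ i', (B j i * star (B j i')) * (B' k i * star (B' k i')) := by
        apply Finset.sum_congr rfl; intro k _
        rw [star_sum, Finset.sum_mul]
        apply Finset.sum_congr rfl; intro i _
        rw [Finset.mul_sum]
        apply Finset.sum_congr rfl; intro i' _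
        rw [star_mul']
        ring
    _ = ∑ i, ∑ i', (B j i * star (B j i')) * ∑ k, (B' k i * star (B' k i')) := by
        rw [Finset.sum_comm]
        apply Finset.sum_congr rfl; intro i _
        rw [Finset.sum_comm]
        apply Finset.sum_congr rfl; intro i' _
        rw [Finset.mul_sum]
    _ = ∑ i, B j i * star (B j i) := by
        apply Finset.sum_congr rfl; intro i _
        simp only [← Complex.star_def, onb_complete hB', mul_ite, mul_one, mul_zero,
          Finset.sum_ite_eq, Finset.mem_univ, if_true]
    _ = 1 := by
        have := hB j j
        simp [dotProduct] at this
        rw [← this]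
        apply Finset.sum_congr rfl; intros
        rw [Complex.star_def]; ring

lemma kron_rank_one {d : ℕ} (a b : Fin d → ℂ) :
    Matrix.kroneckerMap (· * ·) (vecMulVec a (star a)) (vecMulVec b (star b))
      = vecMulVec (fun p : Fin d × Fin d => a p.1 * b p.2)
          (star fun p : Fin d × Fin d => a p.1 * b p.2) := by
  ext p q
  simp only [kroneckerMap_apply, vecMulVec_apply, Pi.star_apply, star_mul']
  ring

lemma dot_phi {d : ℕ} (a b : Fin d → ℂ) :
    (star fun p : Fin d × Fin d => a p.1 * b p.2) ⬝ᵥ PhiVec d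
      = star (∑ i, a i * b i) * ((Real.sqrt d : ℝ) : ℂ)⁻¹ := by
  simp only [dotProduct, PhiVec, Fintype.sum_prod_type, Pi.star_apply, star_mul', mul_ite, mul_zero,
    Finset.sum_ite_eq, Finset.mem_univ, if_true, star_sum, Finset.sum_mul]

lemma cc_val {d : ℕ} (hd : 0 < d) :
    ((Real.sqrt d : ℝ) : ℂ)⁻¹ * star ((Real.sqrt d : ℝ) : ℂ)⁻¹ = (d : ℂ)⁻¹ := by
  have h1 : star ((Real.sqrt d : ℝ) : ℂ) = ((Real.sqrt d : ℝ) : ℂ) := by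
    rw [Complex.star_def, Complex.conj_ofReal]
  rw [star_inv₀, h1, ← mul_inv, ← Complex.ofReal_mul, Real.mul_self_sqrt (by positivity)]
  push_cast
  ring

lemma phi_norm {d : ℕ} (hd : 0 < d) : star (PhiVec d) ⬝ᵥ PhiVec d = 1 := by
  have key : ∀ i1 i2 : Fin d, star (PhiVec d (i1, i2)) * PhiVec d (i1, i2)
      = if i1 = i2 then (d : ℂ)⁻¹ else 0 := by
    intro i1 i2
    by_cases h : i1 = i2
    · simp only [PhiVec, h, if_pos rfl]
      rw [mul_comm]
      exact cc_val hd
    · simp [PhiVec, h]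
  have hd' : (d : ℂ) ≠ 0 := by exact_mod_cast hd.ne'
  calc star (PhiVec d) ⬝ᵥ PhiVec d
      = ∑ i1 : Fin d, ∑ i2 : Fin d, star (PhiVec d (i1, i2)) * PhiVec d (i1, i2) := by
        simp [dotProduct, Fintype.sum_prod_type]
    _ = ∑ _i1 : Fin d, (d : ℂ)⁻¹ := by
        apply Finset.sum_congr rfl; intro i1 _
        simp only [← Complex.star_def, key, Finset.sum_ite_eq, Finset.mem_univ, if_true]
    _ = 1 := by
        simp [Finset.card_univ]
        field_simp


/-- if P = Σ_j Σ_{k∈A_j} |ψ_j⟩⟨ψ_j|⊗|φ_k⟩⟨φ_k| is diagonal in a product basis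
and P ≥ |Φ⟩⟨Φ|, then P ≥ P(B). -/
theorem stmt11 {d : ℕ} (hd : 0 < d)
    (B B' : Fin d → Fin d → ℂ) (hB : IsONB d B) (hB' : IsONB d B')
    (A : Fin d → Finset (Fin d))
    (P : Matrix (Fin d × Fin d) (Fin d × Fin d) ℂ)
    (hP : P = ∑ j, ∑ k ∈ A j,
        Matrix.kroneckerMap (· * ·) (Matrix.vecMulVec (B j) (star (B j)))
          (Matrix.vecMulVec (B' k) (star (B' k))))
    (hge : (P - PhiMat d).PosSemidef) :
    (P - projCB d B).PosSemidef := by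
  classical
  have hd' : (d : ℂ) ≠ 0 := by exact_mod_cast hd.ne'
  have hd0 : (0 : ℂ) ≤ (d : ℂ) := by
    have : ((0:ℝ) : ℂ) ≤ ((d:ℝ) : ℂ) := by
      rw [Complex.real_le_real]; positivity
    simpa using this
  -- the overlap coefficients
  set t : Fin d → Fin d → ℂ := fun j k => ∑ i, B j i * B' k i with ht_def
  -- Step 1: quadratic form of P at Φ
  have hphi1 : star (PhiVec d) ⬝ᵥ (PhiMat d *ᵥ PhiVec d) = 1 := by
    rw [PhiMat, qform_vecMulVec, phi_norm hd]
    simp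
  have hP1 : star (PhiVec d) ⬝ᵥ (P *ᵥ PhiVec d)
      = (∑ j, ∑ k ∈ A j, t j k * star (t j k)) * (d : ℂ)⁻¹ := by
    rw [hP, sum_mulVec', dot_sum, Finset.sum_mul]
    apply Finset.sum_congr rfl; intro j _
    rw [sum_mulVec', dot_sum, Finset.sum_mul]
    apply Finset.sum_congr rfl; intro k _
    rw [kron_rank_one, qform_vecMulVec, dot_phi]
    have : star (star (t j k) * ((Real.sqrt d : ℝ) : ℂ)⁻¹)
        = t j k * star ((Real.sqrt d : ℝ) : ℂ)⁻¹ := by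
      rw [star_mul', star_star]
    rw [this]
    have := cc_val hd
    calc star (t j k) * ((Real.sqrt d : ℝ) : ℂ)⁻¹ * (t j k * star ((Real.sqrt d : ℝ) : ℂ)⁻¹)
        = t j k * star (t j k) * (((Real.sqrt d : ℝ) : ℂ)⁻¹ * star ((Real.sqrt d : ℝ) : ℂ)⁻¹) := by
          ring
      _ = t j k * star (t j k) * (d : ℂ)⁻¹ := by rw [cc_val hd]
  have hform := hge.dotProduct_mulVec_nonneg (PhiVec d)
  rw [sub_mulVec, dotProduct_sub, hphi1, hP1] at hform
  -- Step 2: S = d and per-row saturation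
  have hSge : (d : ℂ) ≤ ∑ j, ∑ k ∈ A j, t j k * star (t j k) := by
    have h1 : (1 : ℂ) ≤ (∑ j, ∑ k ∈ A j, t j k * star (t j k)) * (d : ℂ)⁻¹ :=
      sub_nonneg.mp hform
    have h2 := mul_le_mul_of_nonneg_right h1 hd0
    rw [one_mul, mul_assoc, inv_mul_cancel₀ hd', mul_one] at h2
    exact h2
  have hle : ∀ j, (∑ k ∈ A j, t j k * star (t j k)) ≤ 1 := by
    intro j
    rw [← parseval hB hB' j]
    exact Finset.sum_le_sum_of_subset_of_nonneg (Finset.subset_univ _)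
      (fun k _ _ => mul_star_self_nonneg _)
  have hSle : (∑ j, ∑ k ∈ A j, t j k * star (t j k)) ≤ (d : ℂ) := by
    calc (∑ j, ∑ k ∈ A j, t j k * star (t j k)) ≤ ∑ _j : Fin d, (1 : ℂ) :=
          Finset.sum_le_sum (fun j _ => hle j)
      _ = (d : ℂ) := by simp
  have hjeq : ∀ j, (∑ k ∈ A j, t j k * star (t j k)) = 1 := by
    have hSeq : (∑ j, ∑ k ∈ A j, t j k * star (t j k)) = ∑ _j : Fin d, (1 : ℂ) := by
      rw [le_antisymm hSle hSge]; simp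
    have := (Finset.sum_eq_sum_iff_of_le (fun j _ => hle j)).mp hSeq
    intro j; exact this j (Finset.mem_univ j)
  have ht0 : ∀ j k, k ∉ A j → t j k = 0 := by
    intro j k hk
    have hsd : (∑ k ∈ Finset.univ \ A j, t j k * star (t j k))
        + (∑ k ∈ A j, t j k * star (t j k)) = 1 := by
      rw [Finset.sum_sdiff (Finset.subset_univ (A j))]
      exact parseval hB hB' j
    rw [hjeq j, add_eq_right] at hsd
    have := (Finset.sum_eq_zero_iff_of_nonneg
      (fun k _ => mul_star_self_nonneg (t j k))).mp hsd k (by simp [hk])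
    exact mul_star_self_eq_zero' _ this
  -- Step 3: the projector Q_j fixes w_j = star (B j)
  have hstart : ∀ j k, star (B' k) ⬝ᵥ star (B j) = star (t j k) := by
    intro j k
    rw [ht_def]
    simp only [dotProduct, star_sum, star_mul', Pi.star_apply]
    apply Finset.sum_congr rfl; intros; ring
  have hQw : ∀ j, (∑ k ∈ A j, vecMulVec (B' k) (star (B' k))) *ᵥ star (B j) = star (B j) := by
    intro j
    rw [sum_mulVec']
    calc (∑ k ∈ A j, vecMulVec (B' k) (star (B' k)) *ᵥ star (B j))
        = ∑ k ∈ A j, (star (t j k)) • B' k := by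
          apply Finset.sum_congr rfl; intro k _
          rw [Stmt11Aux.vecMulVec_mulVec, hstart]
      _ = ∑ k, (star (t j k)) • B' k := by
          apply Finset.sum_subset (Finset.subset_univ _)
          intro k _ hk
          rw [ht0 j k hk, star_zero, zero_smul]
      _ = star (B j) := by
          ext i
          simp only [Finset.sum_apply, Pi.smul_apply, smul_eq_mul, ht_def, star_sum, star_mul',
            Pi.star_apply, Finset.sum_mul]
          rw [Finset.sum_comm]
          calc (∑ i' : Fin d, ∑ k : Fin d, star (B j i') * star (B' k i') * B' k i)
              = ∑ i' : Fin d, star (B j i') * ∑ k : Fin d, B' k i * star (B' k i') := by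
                apply Finset.sum_congr rfl; intro i' _
                rw [Finset.mul_sum]
                apply Finset.sum_congr rfl; intros; ring
            _ = star (B j i) := by
                simp only [onb_complete hB', mul_ite, mul_one, mul_zero,
                  Finset.sum_ite_eq, Finset.sum_ite_eq', Finset.mem_univ, if_true]
  -- Step 4: per-j PSD pieces
  have key : ∀ j : Fin d, (Matrix.kroneckerMap (· * ·) (vecMulVec (B j) (star (B j)))
      ((∑ k ∈ A j, vecMulVec (B' k) (star (B' k))) - vecMulVec (star (B j)) (B j))).PosSemidef := by
    intro j
    set p := vecMulVec (B j) (star (B j)) with hp_def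
    set Q := ∑ k ∈ A j, vecMulVec (B' k) (star (B' k)) with hQQ
    set R := vecMulVec (star (B j)) (B j) with hR
    have hBjj : star (B j) ⬝ᵥ B j = 1 := by
      have := hB j j; simpa using this
    have hpH : pᴴ = p := by rw [hp_def, Stmt11Aux.conjTranspose_vecMulVec, star_star]
    have hpI : p * p = p := by
      rw [hp_def, Stmt11Aux.vecMulVec_mul_vecMulVec, hBjj, one_smul]
    have hQH : Qᴴ = Q := by
      rw [hQQ, conjTranspose_sum]
      apply Finset.sum_congr rfl; intro k _
      rw [Stmt11Aux.conjTranspose_vecMulVec, star_star]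
    have hQI : Q * Q = Q := by
      rw [hQQ, Finset.sum_mul_sum]
      calc (∑ k ∈ A j, ∑ l ∈ A j,
              vecMulVec (B' k) (star (B' k)) * vecMulVec (B' l) (star (B' l)))
          = ∑ k ∈ A j, ∑ l ∈ A j,
              (if k = l then (1:ℂ) else 0) • vecMulVec (B' k) (star (B' l)) := by
            apply Finset.sum_congr rfl; intro k _
            apply Finset.sum_congr rfl; intro l _
            rw [Stmt11Aux.vecMulVec_mul_vecMulVec, hB' k l]
        _ = ∑ k ∈ A j, vecMulVec (B' k) (star (B' k)) := by
            apply Finset.sum_congr rfl; intro k hk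
            simp [ite_smul, one_smul, zero_smul, Finset.sum_ite_eq, hk]
    have hRw : R = vecMulVec (star (B j)) (star (star (B j))) := by rw [star_star]
    have hQR : Q * R = R := by
      rw [hR, Stmt11Aux.mul_vecMulVec, hQw j]
    have hRH : Rᴴ = R := by rw [hRw, Stmt11Aux.conjTranspose_vecMulVec, star_star]
    have hRQ : R * Q = R := by
      have : (Q * R)ᴴ = R := by rw [hQR, hRH]
      rw [conjTranspose_mul, hQH, hRH] at this
      exact this
    have hRR : R * R = R := by
      have hdp : B j ⬝ᵥ star (B j) = 1 := by rw [dotProduct_comm]; exact hBjj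
      rw [hR, Stmt11Aux.vecMulVec_mul_vecMulVec, hdp, one_smul]
    apply psd_of_idem
    · rw [kron_conjTranspose, hpH, conjTranspose_sub, hQH, hRH]
    · rw [← Matrix.mul_kronecker_mul]
      have h2 : (Q - R) * (Q - R) = Q - R := by
        rw [sub_mul, mul_sub, mul_sub, hQI, hQR, hRQ, hRR]
        abel
      rw [hpI, h2]
  -- Step 5: assemble
  have hdecomp : P - projCB d B = ∑ j, Matrix.kroneckerMap (· * ·)
      (vecMulVec (B j) (star (B j)))
      ((∑ k ∈ A j, vecMulVec (B' k) (star (B' k))) - vecMulVec (star (B j)) (B j)) := by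
    rw [hP, projCB, ← Finset.sum_sub_distrib]
    apply Finset.sum_congr rfl
    intro j _
    rw [kron_sub_right, kron_sum_right]
  rw [hdecomp]
  exact psd_sum _ _ (fun j _ => key j)
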